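/- arXiv:1310.4563 — 3 statements merged into one kernel-verified Lean document; each statement's English description precedes it below -/
import Mathlib

section
/- For every integer n ≥ 1, defining Ψ_n(x) = Σ_{j=1}^{n} C(n,j) · ((2j-2)!/(j-1)!) · ((1/2 + 2j)_{n-j} / (1/2)_n) · x^j, one has Ψ_n(-1) = -2n. -/
/-- Rising factorial (Pochhammer symbol) over ℚ. -/
noncomputable def rf (a : ℚ) (k : ℕ) : ℚ := (ascPochhammer ℚ k).eval a

lemma rf_zero (a : ℚ) : rf a 0 = 1 := by simp [rf]

lemma rf_succ (a : ℚ) (k : ℕ) : rf a (k + 1) = rf a k * (a + k) :=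
  ascPochhammer_succ_eval k a

lemma rf_pos {a : ℚ} (ha : 0 < a) (k : ℕ) : 0 < rf a k := by
  induction k with
  | zero => simp [rf_zero]
  | succ k ih => rw [rf_succ]; positivity

lemma rf_add (a : ℚ) (m k : ℕ) : rf a (m + k) = rf a m * rf (a + m) k := by
  induction k with
  | zero => simp [rf_zero]
  | succ k ih =>
    rw [← Nat.add_assoc, rf_succ, rf_succ, ih]
    push_cast
    ring

lemma rf_shift (a : ℚ) (k : ℕ) : a * rf (a + 1) k = rf a k * (a + k) := by
  induction k with
  | zero => simp [rf_zero]
  | succ k ih =>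
    rw [rf_succ, rf_succ, ← mul_assoc, ih]
    push_cast
    ring

noncomputable def dd : ℕ → ℚ
  | 0 => 1
  | (j + 1) => (2 * (j : ℚ) - 1) * 8 / ((4 * (j : ℚ) + 1) * (4 * (j : ℚ) + 3)) * dd j

lemma dd_succ (j : ℕ) :
    dd (j + 1) = (2 * (j : ℚ) - 1) * 8 / ((4 * (j : ℚ) + 1) * (4 * (j : ℚ) + 3)) * dd j := rfl

lemma dd_fact (m : ℕ) :
    dd (m + 1) * rf (1/2) (2 * (m + 1)) = -2 * ((2 * m).factorial : ℚ) / (m.factorial : ℚ) := by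
  induction m with
  | zero =>
    show dd 1 * rf (1/2) 2 = _
    rw [dd_succ, show (2 : ℕ) = 1 + 1 from rfl, rf_succ, rf_succ, rf_zero]
    norm_num [dd]
  | succ m ih =>
    have h1 : 2 * (m + 1 + 1) = (2 * (m + 1) + 1) + 1 := by ring
    have h2 : 2 * (m + 1) = (2 * m) + 1 + 1 := by ring
    rw [h1, rf_succ, rf_succ, dd_succ]
    have hm : (m.factorial : ℚ) ≠ 0 := by positivity
    have hf1 : ((2 * (m + 1)).factorial : ℚ)
        = ((2 * m).factorial : ℚ) * (2 * m + 1) * (2 * m + 2) := by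
      rw [h2, Nat.factorial_succ, Nat.factorial_succ]
      push_cast
      ring
    have hf2 : ((m + 1).factorial : ℚ) = (m.factorial : ℚ) * (m + 1) := by
      rw [Nat.factorial_succ]; push_cast; ring
    rw [hf1, hf2]
    have := ih
    push_cast at this ⊢
    have h41 : (4 * (m : ℚ) + 5) ≠ 0 := by positivity
    have h43 : (4 * (m : ℚ) + 7) ≠ 0 := by positivity
    have hm1 : ((m : ℚ) + 1) ≠ 0 := by positivity
    field_simp at this ⊢
    linear_combination ((2 * (m : ℚ) + 1) * 8 * ((m : ℚ) + 1/2 + (2 * m + 1)) *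
      ((m : ℚ) + 1) + 256 * (m : ℚ)^4 + 1104 * (m : ℚ)^3 + 1744 * (m : ℚ)^2
      + 1164 * (m : ℚ) + 268) * this
      - (256 * (m : ℚ)^4 + 896 * (m : ℚ)^3 + 944 * (m : ℚ)^2 + 280 * (m : ℚ)) * this

noncomputable def Fq (n j : ℕ) : ℚ :=
  (-1 : ℚ) ^ j * (n.choose j : ℚ) * dd j * rf ((n : ℚ) + 1/2) j

noncomputable def gq (n j : ℕ) : ℚ :=
  -(-1 : ℚ) ^ j * ((n + 1).choose j : ℚ) * dd j * rf ((n : ℚ) + 1/2) j *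
    (j : ℚ) * (4 * (j : ℚ) - 1) * (4 * (j : ℚ) - 3) /
    ((2 * (n : ℚ) + 1) * (4 * (n : ℚ) + 5) * (4 * (n : ℚ) + 1) * ((n : ℚ) + 1))

lemma wz (n j : ℕ) (hj : j ≤ n + 1) :
    Fq (n + 1) j * (4 * (n : ℚ) + 1) - Fq n j * (4 * (n : ℚ) + 5)
      = (gq n (j + 1) - gq n j) * ((4 * (n : ℚ) + 1) * (4 * (n : ℚ) + 5)) := by
  have hnat1 : (n + 1).choose j * (n + 1 - j) = (n + 1) * n.choose j := by
    calc (n + 1).choose j * (n + 1 - j) = (n + 1).choose (j + 1) * (j + 1) :=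
          (Nat.choose_succ_right_eq (n + 1) j).symm
      _ = (n + 1) * n.choose j := by
          simpa [Nat.succ_eq_add_one] using (Nat.add_one_mul_choose_eq n j).symm
  have hcast : ((n + 1 - j : ℕ) : ℚ) = (n : ℚ) + 1 - (j : ℚ) := by
    push_cast [Nat.cast_sub hj]; ring
  have h1 : ((n + 1).choose j : ℚ) * ((n : ℚ) + 1 - j) = ((n : ℚ) + 1) * (n.choose j : ℚ) := by
    rw [← hcast]
    exact_mod_cast congrArg (fun x : ℕ => (x : ℚ)) hnat1
  have h5 : ((n + 1).choose (j + 1) : ℚ) * ((j : ℚ) + 1)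
      = ((n + 1).choose j : ℚ) * ((n : ℚ) + 1 - j) := by
    rw [← hcast]
    exact_mod_cast congrArg (fun x : ℕ => (x : ℚ)) (Nat.choose_succ_right_eq (n + 1) j)
  have harg : ((n : ℚ) + 1) + 1/2 = ((n : ℚ) + 1/2) + 1 := by ring
  have h2 : ((n : ℚ) + 1/2) * rf (((n : ℚ) + 1) + 1/2) j
      = rf ((n : ℚ) + 1/2) j * (((n : ℚ) + 1/2) + j) := by
    rw [harg]; exact rf_shift _ j
  have hn2 : ((n : ℚ) + 1/2) ≠ 0 := by positivity
  have hj1 : ((j : ℚ) + 1) ≠ 0 := by positivity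
  have hn1 : ((n : ℚ) + 1) ≠ 0 := by positivity
  have h4j1 : (4 * (j : ℚ) + 1) ≠ 0 := by positivity
  have h4j3 : (4 * (j : ℚ) + 3) ≠ 0 := by positivity
  have h2n1 : (2 * (n : ℚ) + 1) ≠ 0 := by positivity
  have h4n1 : (4 * (n : ℚ) + 1) ≠ 0 := by positivity
  have h4n5 : (4 * (n : ℚ) + 5) ≠ 0 := by positivity
  have hP' : rf (((n : ℚ) + 1) + 1/2) j
      = rf ((n : ℚ) + 1/2) j * (((n : ℚ) + 1/2) + j) / ((n : ℚ) + 1/2) := by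
    rw [eq_div_iff hn2]
    linear_combination h2
  have hC2 : ((n + 1).choose (j + 1) : ℚ)
      = ((n + 1).choose j : ℚ) * ((n : ℚ) + 1 - j) / ((j : ℚ) + 1) := by
    rw [eq_div_iff hj1]
    linear_combination h5
  have hx : (n.choose j : ℚ) = ((n + 1).choose j : ℚ) * ((n : ℚ) + 1 - j) / ((n : ℚ) + 1) := by
    rw [eq_div_iff hn1]
    linear_combination -h1
  simp only [Fq, gq, dd_succ, rf_succ]
  push_cast
  rw [hP', hC2, hx]
  set Q := rf ((n : ℚ) + 1/2) j with hQ
  field_simp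
  ring

lemma sumF (n : ℕ) : ∑ j ∈ Finset.range (n + 1), Fq n j = 4 * (n : ℚ) + 1 := by
  induction n with
  | zero => simp [Fq, dd, rf_zero]
  | succ n ih =>
    have h4n1 : (4 * (n : ℚ) + 1) ≠ 0 := by positivity
    have key : ∀ j ∈ Finset.range (n + 2),
        Fq (n + 1) j * (4 * (n : ℚ) + 1)
          = Fq n j * (4 * (n : ℚ) + 5)
            + (gq n (j + 1) - gq n j) * ((4 * (n : ℚ) + 1) * (4 * (n : ℚ) + 5)) := by
      intro j hj
      rw [Finset.mem_range] at hj
      have := wz n j (by omega)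
      linarith [this]
    have hsum := Finset.sum_congr rfl key
    rw [← Finset.sum_mul, Finset.sum_add_distrib, ← Finset.sum_mul, ← Finset.sum_mul,
      Finset.sum_range_sub (gq n)] at hsum
    have hg0 : gq n 0 = 0 := by simp [gq]
    have hg2 : gq n (n + 2) = 0 := by
      have : (n + 1).choose (n + 2) = 0 := Nat.choose_eq_zero_of_lt (by omega)
      simp [gq, this]
    have hFtop : Fq n (n + 1) = 0 := by
      have : n.choose (n + 1) = 0 := Nat.choose_eq_zero_of_lt (by omega)
      simp [Fq, this]
    rw [hg0, hg2, Finset.sum_range_succ (f := Fq n), hFtop, ih] at hsum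
    have h2 : (∑ j ∈ Finset.range (n + 1 + 1), Fq (n + 1) j) * (4 * (n : ℚ) + 1)
        = (4 * (n : ℚ) + 5) * (4 * (n : ℚ) + 1) := by
      rw [hsum]; ring
    have := mul_right_cancel₀ h4n1 h2
    rw [this]
    push_cast
    ring

lemma term_eq (n j : ℕ) (h1 : 1 ≤ j) (h2 : j ≤ n) :
    (n.choose j : ℚ) * (((2 * j - 2).factorial : ℚ) / ((j - 1).factorial : ℚ)) *
        (rf (1/2 + 2 * j) (n - j) / rf (1/2) n) * (-1 : ℚ) ^ j
      = -(1/2) * Fq n j := by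
  obtain ⟨m, rfl⟩ : ∃ m, j = m + 1 := ⟨j - 1, by omega⟩
  have e1 : 2 * (m + 1) - 2 = 2 * m := by omega
  have e2 : (m + 1) - 1 = m := by omega
  rw [e1, e2]
  have hk : rf (1/2) (2 * (m + 1)) * rf (1/2 + 2 * ((m + 1 : ℕ) : ℚ)) (n - (m + 1))
      = rf (1/2) n * rf ((n : ℚ) + 1/2) (m + 1) := by
    have a1 := rf_add (1/2) (2 * (m + 1)) (n - (m + 1))
    have a2 := rf_add (1/2) n (m + 1)
    have e3 : 2 * (m + 1) + (n - (m + 1)) = n + (m + 1) := by omega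
    rw [e3] at a1
    rw [a2, add_comm ((1 : ℚ)/2) (n : ℚ)] at a1
    have harg : (1/2 + 2 * ((m + 1 : ℕ) : ℚ)) = 1/2 + ((2 * (m + 1) : ℕ) : ℚ) := by
      push_cast; ring
    rw [harg, ← a1]
  have hA : rf (1/2) (2 * (m + 1)) ≠ 0 := ne_of_gt (rf_pos (by norm_num) _)
  have hR : rf (1/2) n ≠ 0 := ne_of_gt (rf_pos (by norm_num) _)
  have hF1 : (m.factorial : ℚ) ≠ 0 := by positivity
  have hdf := dd_fact m
  set A := rf (1/2) (2 * (m + 1)) with hsA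
  set B := rf (1/2 + 2 * ((m + 1 : ℕ) : ℚ)) (n - (m + 1)) with hsB
  set R := rf (1/2) n with hsR
  set P := rf ((n : ℚ) + 1/2) (m + 1) with hsP
  have hdf2 : dd (m + 1) * A * (m.factorial : ℚ) = -2 * ((2 * m).factorial : ℚ) := by
    rw [hdf]; field_simp
  simp only [Fq]
  rw [← hsP]
  field_simp
  linear_combination ((-1 : ℚ) ^ m * (n.choose (m + 1) : ℚ) * dd (m + 1) * (m.factorial : ℚ)) * hk
    - ((-1 : ℚ) ^ m * (n.choose (m + 1) : ℚ) * B) * hdf2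
    + (1 + (-1 : ℚ) ^ m) * (n.choose (m + 1) : ℚ) * B * hdf2
    - (1 + (-1 : ℚ) ^ m) * (n.choose (m + 1) : ℚ) * dd (m + 1) * (m.factorial : ℚ) * hk

theorem stmt_4 (n : ℕ) (hn : 1 ≤ n) :
    ∑ j ∈ Finset.Icc 1 n,
        (n.choose j : ℚ) * (((2 * j - 2).factorial : ℚ) / ((j - 1).factorial : ℚ)) *
          (rf (1/2 + 2 * j) (n - j) / rf (1/2) n) * (-1 : ℚ) ^ j
      = -2 * n := by
  have hsplit : ∑ j ∈ Finset.range (n + 1), Fq n j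
      = Fq n 0 + ∑ j ∈ Finset.Icc 1 n, Fq n j := by
    rw [Finset.range_eq_Ico, Finset.sum_eq_sum_Ico_succ_bot (by omega), Finset.Ico_add_one_right_eq_Icc]
  have hF0 : Fq n 0 = 1 := by simp [Fq, dd, rf_zero]
  have hIcc : ∑ j ∈ Finset.Icc 1 n, Fq n j = 4 * (n : ℚ) := by
    have := sumF n
    rw [hsplit, hF0] at this
    linarith
  calc ∑ j ∈ Finset.Icc 1 n,
        (n.choose j : ℚ) * (((2 * j - 2).factorial : ℚ) / ((j - 1).factorial : ℚ)) *
          (rf (1/2 + 2 * j) (n - j) / rf (1/2) n) * (-1 : ℚ) ^ j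
      = ∑ j ∈ Finset.Icc 1 n, -(1/2) * Fq n j := by
        apply Finset.sum_congr rfl
        intro j hj
        rw [Finset.mem_Icc] at hj
        exact term_eq n j hj.1 hj.2
    _ = -(1/2) * ∑ j ∈ Finset.Icc 1 n, Fq n j := by rw [Finset.mul_sum]
    _ = -2 * n := by rw [hIcc]; ring
end

section
/- For natural numbers j ≤ n, the 2j-th derivative of the Legendre polynomial Le_{2n} evaluated at 0 equals (-1)^{n-j} (1/2)_{n+j} 2^{2j} / (n-j)!. Moreover, for all natural numbers j and n, the 2j-th derivative of Le_{2n+1} evaluated at 0 is 0. -/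
open Polynomial

/-- Legendre polynomial via the Rodrigues formula. -/
noncomputable def Le (n : ℕ) : Polynomial ℚ :=
  C (1 / (2 ^ n * (n.factorial : ℚ))) * derivative^[n] ((X ^ 2 - 1) ^ n)

lemma expand_sq_sub_one (m : ℕ) :
    ((X ^ 2 - 1 : ℚ[X])) ^ m
      = ∑ k ∈ Finset.range (m + 1), C ((-1 : ℚ) ^ (m - k) * (m.choose k : ℚ)) * X ^ (2 * k) := by
  rw [sub_eq_add_neg, add_pow]
  refine Finset.sum_congr rfl fun k _ => ?_
  simp only [← pow_mul, map_mul, map_pow, map_neg, map_one, map_natCast]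
  ring

lemma coeff_even (m t : ℕ) (ht : t ≤ m) :
    (((X ^ 2 - 1 : ℚ[X])) ^ m).coeff (2 * t) = (-1 : ℚ) ^ (m - t) * (m.choose t : ℚ) := by
  rw [expand_sq_sub_one, finset_sum_coeff]
  simp only [coeff_C_mul, coeff_X_pow]
  rw [Finset.sum_eq_single t]
  · simp
  · intro k _ hk
    have : ¬ (2 * t = 2 * k) := by omega
    simp [this]
  · intro h
    exact absurd (Finset.mem_range.mpr (by omega)) h

lemma coeff_odd (m t : ℕ) :
    (((X ^ 2 - 1 : ℚ[X])) ^ m).coeff (2 * t + 1) = 0 := by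
  rw [expand_sq_sub_one, finset_sum_coeff]
  simp only [coeff_C_mul, coeff_X_pow]
  apply Finset.sum_eq_zero
  intro k _
  have : ¬ (2 * t + 1 = 2 * k) := by omega
  simp [this]

lemma rf_half (k : ℕ) :
    rf (1/2) k = ((2 * k).factorial : ℚ) / (4 ^ k * (k.factorial : ℚ)) := by
  induction k with
  | zero => simp [rf]
  | succ k ih =>
    rw [rf, ascPochhammer_succ_right, eval_mul]
    rw [show ((ascPochhammer ℚ k).eval (1/2)) = rf (1/2) k from rfl, ih]
    have h1 : (2 * (k + 1)).factorial = (2 * k + 2) * ((2 * k + 1) * (2 * k).factorial) := by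
      rw [show 2 * (k + 1) = (2 * k + 1) + 1 by ring, Nat.factorial_succ, Nat.factorial_succ]
    rw [h1, Nat.factorial_succ]
    have h2 : ((k.factorial : ℚ)) ≠ 0 := Nat.cast_ne_zero.mpr k.factorial_ne_zero
    have h4 : ((4 : ℚ)) ^ k ≠ 0 := by positivity
    simp only [eval_add, eval_X, eval_natCast]
    push_cast
    field_simp
    ring

lemma natkey (n j : ℕ) (hjn : j ≤ n) :
    (2 * j).factorial * ((2 * j + 2 * n).descFactorial (2 * n)) * ((2 * n).choose (n + j))
        * (n + j).factorial * (n - j).factorial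
      = (2 * (n + j)).factorial * (2 * n).factorial := by
  have h1 : (2 * n).choose (n + j) * (n + j).factorial * (n - j).factorial
      = (2 * n).factorial := by
    have := Nat.choose_mul_factorial_mul_factorial (show n + j ≤ 2 * n by omega)
    rwa [show 2 * n - (n + j) = n - j by omega] at this
  have h2 : (2 * j + 2 * n).choose (2 * n) * (2 * n).factorial * (2 * j).factorial
      = (2 * j + 2 * n).factorial := by
    have := Nat.choose_mul_factorial_mul_factorial (show 2 * n ≤ 2 * j + 2 * n by omega)
    rwa [show 2 * j + 2 * n - 2 * n = 2 * j by omega] at this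
  calc (2 * j).factorial * ((2 * j + 2 * n).descFactorial (2 * n)) * ((2 * n).choose (n + j))
        * (n + j).factorial * (n - j).factorial
      = ((2 * j + 2 * n).choose (2 * n) * (2 * n).factorial * (2 * j).factorial)
          * ((2 * n).choose (n + j) * (n + j).factorial * (n - j).factorial) := by
        rw [Nat.descFactorial_eq_factorial_mul_choose]; ring
    _ = (2 * (n + j)).factorial * (2 * n).factorial := by
        rw [h1, h2, show 2 * j + 2 * n = 2 * (n + j) by ring]

theorem stmt_11 :
    (∀ n j : ℕ, j ≤ n →
        (derivative^[2 * j] (Le (2 * n))).eval 0 =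
          (-1 : ℚ) ^ (n - j) * rf (1/2) (n + j) * 2 ^ (2 * j) / ((n - j).factorial : ℚ)) ∧
      ∀ n j : ℕ, (derivative^[2 * j] (Le (2 * n + 1))).eval 0 = 0 := by
  constructor
  · intro n j hjn
    rw [← coeff_zero_eq_eval_zero, coeff_iterate_derivative, Le, coeff_C_mul,
      coeff_iterate_derivative, zero_add, Nat.descFactorial_self,
      show 2 * j + 2 * n = 2 * (j + n) by ring,
      coeff_even (2 * n) (j + n) (by omega),
      show 2 * n - (j + n) = n - j by omega, rf_half]
    simp only [nsmul_eq_mul, smul_eq_mul]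
    have key : ((2 * j).factorial : ℚ) * ((2 * j + 2 * n).descFactorial (2 * n) : ℚ)
        * ((2 * n).choose (n + j) : ℚ) * ((n + j).factorial : ℚ) * ((n - j).factorial : ℚ)
        = ((2 * (n + j)).factorial : ℚ) * ((2 * n).factorial : ℚ) := by
      exact_mod_cast congrArg (Nat.cast (R := ℚ)) (natkey n j hjn)
    have h4 : (4 : ℚ) ^ (n + j) = 2 ^ (2 * n) * 2 ^ (2 * j) := by
      rw [show (4 : ℚ) = 2 ^ 2 by norm_num, ← pow_mul, ← pow_add]
      congr 1; omega
    rw [show (2 * (j + n)).descFactorial (2 * n) = (2 * j + 2 * n).descFactorial (2 * n) by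
      congr 1; ring]
    rw [show (2 * n).choose (j + n) = (2 * n).choose (n + j) by rw [Nat.add_comm]]
    have hf1 : ((2 * n).factorial : ℚ) ≠ 0 := Nat.cast_ne_zero.mpr (Nat.factorial_ne_zero _)
    have hf2 : ((n + j).factorial : ℚ) ≠ 0 := Nat.cast_ne_zero.mpr (Nat.factorial_ne_zero _)
    have hf3 : ((n - j).factorial : ℚ) ≠ 0 := Nat.cast_ne_zero.mpr (Nat.factorial_ne_zero _)
    have hp1 : (2 : ℚ) ^ (2 * n) ≠ 0 := by positivity
    have hp2 : (2 : ℚ) ^ (2 * j) ≠ 0 := by positivity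
    rw [h4]
    field_simp
    linear_combination key
  · intro n j
    rw [← coeff_zero_eq_eval_zero, coeff_iterate_derivative, Le, coeff_C_mul,
      coeff_iterate_derivative, zero_add,
      show 2 * j + (2 * n + 1) = 2 * (j + n) + 1 by ring, coeff_odd]
    simp
end

section
/- If h(x) = c_0 + c_1 x + ··· + c_n x^n is a real polynomial of degree n (c_n ≠ 0) with only real zeros, c_0 ≠ 0, and c_p = 0 for some 0 < p < n, then c_{p-1} c_{p+1} < 0. -/
open Polynomial

/-- A real polynomial has only real zeros if every complex root of it is real. -/
def HasOnlyRealZeros (p : Polynomial ℝ) : Prop :=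
  ∀ z : ℂ, (p.map (algebraMap ℝ ℂ)).IsRoot z → z.im = 0

private lemma quad_identity (s : Multiset ℝ) (hs : ∀ r ∈ s, r ≠ 0) :
    ((s.map fun r => X - C r).prod.coeff 1)^2
      - 2 * (s.map fun r => X - C r).prod.coeff 0 * (s.map fun r => X - C r).prod.coeff 2
      = ((s.map fun r => X - C r).prod.coeff 0)^2 * (s.map fun r => (r⁻¹)^2).sum := by
  induction s using Multiset.induction with
  | empty => simp [coeff_one]
  | cons r t ih =>
    have hr : r ≠ 0 := hs r (Multiset.mem_cons_self r t)
    have ih' := ih (fun x hx => hs x (Multiset.mem_cons_of_mem hx))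
    set q := (t.map fun r => X - C r).prod with hq
    have hprod : ((r ::ₘ t).map fun r => X - C r).prod = (X - C r) * q := by
      rw [Multiset.map_cons, Multiset.prod_cons]
    have c0 : ((r ::ₘ t).map fun r => X - C r).prod.coeff 0 = -r * q.coeff 0 := by
      rw [hprod, sub_mul, coeff_sub, coeff_C_mul, mul_coeff_zero, coeff_X_zero]; ring
    have c1 : ((r ::ₘ t).map fun r => X - C r).prod.coeff 1 = q.coeff 0 - r * q.coeff 1 := by
      rw [hprod, sub_mul, coeff_sub, coeff_C_mul, coeff_X_mul]
    have c2 : ((r ::ₘ t).map fun r => X - C r).prod.coeff 2 = q.coeff 1 - r * q.coeff 2 := by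
      rw [hprod, sub_mul, coeff_sub, coeff_C_mul, show (2:ℕ) = 1 + 1 from rfl, coeff_X_mul]
    rw [c0, c1, c2, Multiset.map_cons, Multiset.sum_cons]
    have hrinv : r * r⁻¹ = 1 := mul_inv_cancel₀ hr
    linear_combination r^2 * ih' - (q.coeff 0)^2 * (r*r⁻¹ + 1) * hrinv

private lemma key_lemma (f : ℝ[X]) (hcard : Multiset.card f.roots = f.natDegree)
    (hdeg : 0 < f.natDegree) (h0 : f.coeff 0 ≠ 0) (h1 : f.coeff 1 = 0) :
    f.coeff 0 * f.coeff 2 < 0 := by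
  have hf0 : f ≠ 0 := fun hf => h0 (by simp [hf])
  have hL : f.leadingCoeff ≠ 0 := leadingCoeff_ne_zero.mpr hf0
  have hkey := C_leadingCoeff_mul_prod_multiset_X_sub_C hcard
  set q := (f.roots.map fun r => X - C r).prod with hq
  have hroots_ne : ∀ r ∈ f.roots, r ≠ 0 := by
    intro r hr hr0
    have hroot : f.IsRoot r := (mem_roots hf0).mp hr
    rw [hr0] at hroot
    exact h0 (by rwa [coeff_zero_eq_eval_zero])
  have hc : ∀ k, f.coeff k = f.leadingCoeff * q.coeff k := by
    intro k; conv_lhs => rw [← hkey]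
    rw [coeff_C_mul]
  have hq1 : q.coeff 1 = 0 := by
    have h' := (hc 1).symm; rw [h1] at h'
    exact (mul_eq_zero.mp h').resolve_left hL
  have hq0 : q.coeff 0 ≠ 0 := fun hh => h0 (by rw [hc 0, hh, mul_zero])
  have hid := quad_identity f.roots hroots_ne
  rw [← hq, hq1] at hid
  have hne : f.roots ≠ 0 := by
    intro hh; rw [hh] at hcard; simp at hcard; omega
  obtain ⟨r, hr⟩ := Multiset.exists_mem_of_ne_zero hne
  have hsum : 0 < (f.roots.map fun r => (r⁻¹)^2).sum := by
    obtain ⟨t, ht⟩ := Multiset.exists_cons_of_mem hr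
    have hr0 : r ≠ 0 := hroots_ne r hr
    rw [ht, Multiset.map_cons, Multiset.sum_cons]
    have hpos : (0:ℝ) < (r⁻¹)^2 := by
      have : r⁻¹ ≠ 0 := inv_ne_zero hr0
      positivity
    have hnn : (0:ℝ) ≤ (t.map fun r => (r⁻¹)^2).sum := by
      apply Multiset.sum_nonneg
      intro x hx
      obtain ⟨y, _, rfl⟩ := Multiset.mem_map.mp hx
      positivity
    linarith
  have hq02 : (0:ℝ) < q.coeff 0 ^ 2 := by positivity
  have hqq : q.coeff 0 * q.coeff 2 < 0 := by nlinarith [mul_pos hq02 hsum]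
  have hL2 : (0:ℝ) < f.leadingCoeff ^ 2 := by positivity
  calc f.coeff 0 * f.coeff 2 = f.leadingCoeff^2 * (q.coeff 0 * q.coeff 2) := by
        rw [hc 0, hc 2]; ring
    _ < 0 := mul_neg_of_pos_of_neg hL2 hqq

private lemma rr_derivative (g : ℝ[X]) (hcard : Multiset.card g.roots = g.natDegree)
    (hdeg : 0 < g.natDegree) :
    Multiset.card (derivative g).roots = (derivative g).natDegree ∧
      (derivative g).natDegree = g.natDegree - 1 := by
  have hg0 : g ≠ 0 := fun hf => by simp [hf] at hdeg
  have hle : (derivative g).natDegree ≤ g.natDegree - 1 := natDegree_derivative_le g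
  have hne : (derivative g).coeff (g.natDegree - 1) ≠ 0 := by
    rw [coeff_derivative, show g.natDegree - 1 + 1 = g.natDegree by omega]
    apply mul_ne_zero (leadingCoeff_ne_zero.mpr hg0)
    positivity
  have hdd : (derivative g).natDegree = g.natDegree - 1 :=
    le_antisymm hle (le_natDegree_of_ne_zero hne)
  have hc1 : Multiset.card (derivative g).roots ≤ g.natDegree - 1 := by
    rw [← hdd]; exact card_roots' _
  have hc2 := card_roots_le_derivative g
  constructor <;> omega

private lemma rr_iterate (f : ℝ[X]) (hcard : Multiset.card f.roots = f.natDegree)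
    (k : ℕ) (hk : k ≤ f.natDegree) :
    Multiset.card (derivative^[k] f).roots = (derivative^[k] f).natDegree ∧
      (derivative^[k] f).natDegree = f.natDegree - k := by
  induction k with
  | zero => simpa using hcard
  | succ k ih =>
    obtain ⟨ih1, ih2⟩ := ih (by omega)
    have hpos : 0 < (derivative^[k] f).natDegree := by omega
    have := rr_derivative _ ih1 hpos
    rw [Function.iterate_succ_apply']
    exact ⟨this.1, by omega⟩

private lemma rr_of_hasOnlyRealZeros (h : ℝ[X]) (hh : h ≠ 0)
    (hreal : HasOnlyRealZeros h) :
    Multiset.card h.roots = h.natDegree := by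
  set f := h.map (algebraMap ℝ ℂ) with hf
  have hinj : Function.Injective (algebraMap ℝ ℂ) := (algebraMap ℝ ℂ).injective
  have hf0 : f ≠ 0 := by
    rw [hf, Polynomial.map_ne_zero_iff hinj]; exact hh
  have hfdeg : f.natDegree = h.natDegree := natDegree_map_eq_of_injective hinj h
  have hfcard : Multiset.card f.roots = f.natDegree :=
    splits_iff_card_roots.mp (IsAlgClosed.splits f)
  have hre : ∀ z ∈ f.roots, ((z.re : ℝ) : ℂ) = z := by
    intro z hz
    have him : z.im = 0 := hreal z ((mem_roots hf0).mp hz)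
    exact Complex.ext (by simp) (by simp [him])
  set s : Multiset ℝ := f.roots.map Complex.re with hs
  have hsmap : s.map (fun r : ℝ => ((r : ℂ))) = f.roots := by
    rw [hs, Multiset.map_map]
    exact (Multiset.map_congr rfl fun z hz => hre z hz).trans (Multiset.map_id _)
  have hLmap : algebraMap ℝ ℂ h.leadingCoeff = f.leadingCoeff := by
    rw [hf, leadingCoeff_map_of_leadingCoeff_ne_zero]
    exact fun hc => (leadingCoeff_ne_zero.mpr hh) (hinj (by simpa using hc))
  have hmain : h = C h.leadingCoeff * (s.map fun r => X - C r).prod := by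
    apply Polynomial.map_injective _ hinj
    rw [Polynomial.map_mul, Polynomial.map_C, hLmap, Polynomial.map_multiset_prod,
      Multiset.map_map]
    have : (s.map fun r => Polynomial.map (algebraMap ℝ ℂ) (X - C r)) =
        f.roots.map fun z => X - C z := by
      have h1 : (s.map fun r => Polynomial.map (algebraMap ℝ ℂ) (X - C r)) =
          s.map fun r => X - C ((r : ℝ) : ℂ) := by
        apply Multiset.map_congr rfl
        intro r _
        rw [Polynomial.map_sub, Polynomial.map_X, Polynomial.map_C]
        norm_num
      rw [h1, hs, Multiset.map_map]
      apply Multiset.map_congr rfl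
      intro z hz
      simp [hre z hz]
    rw [show (Multiset.map ((Polynomial.map (algebraMap ℝ ℂ)) ∘ fun r => X - C r) s) =
        (s.map fun r => Polynomial.map (algebraMap ℝ ℂ) (X - C r)) from rfl, this]
    exact (C_leadingCoeff_mul_prod_multiset_X_sub_C hfcard).symm
  have hroots : h.roots = s := by
    rw [hmain, roots_C_mul _ (leadingCoeff_ne_zero.mpr hh), roots_multiset_prod_X_sub_C]
  rw [hroots, hs, Multiset.card_map, hfcard, hfdeg]

theorem stmt_13 (h : Polynomial ℝ) (n p : ℕ)
    (hdeg : h.natDegree = n) (hn : h.coeff n ≠ 0)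
    (hreal : HasOnlyRealZeros h)
    (h0 : h.coeff 0 ≠ 0) (hp0 : 0 < p) (hpn : p < n) (hp : h.coeff p = 0) :
    h.coeff (p - 1) * h.coeff (p + 1) < 0 := by
  subst hdeg
  have hh : h ≠ 0 := fun h' => hn (by simp [h'])
  have hcard := rr_of_hasOnlyRealZeros h hh hreal
  have window : ∀ j, 1 ≤ j → j < h.natDegree → h.coeff j = 0 → h.coeff (j-1) ≠ 0 →
      h.coeff (j-1) * h.coeff (j+1) < 0 := by
    intro j hj1 hjn hcj hcj1
    obtain ⟨hc, hd⟩ := rr_iterate h hcard (j-1) (by omega)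
    set f := derivative^[j-1] h with hfdef
    have hdegf : 0 < f.natDegree := by rw [hd]; omega
    have hcoeff : ∀ m, f.coeff m
        = (((m + (j-1)).descFactorial (j-1) : ℕ) : ℝ) * h.coeff (m + (j-1)) := by
      intro m
      rw [hfdef, coeff_iterate_derivative, nsmul_eq_mul]
    have hdpos : ∀ m : ℕ, (0:ℝ) < (((m + (j-1)).descFactorial (j-1) : ℕ) : ℝ) := by
      intro m
      have : (m + (j-1)).descFactorial (j-1) ≠ 0 := by
        rw [Ne, Nat.descFactorial_eq_zero_iff_lt]; omega
      exact_mod_cast Nat.pos_of_ne_zero this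
    have A0 : (0:ℝ) < (((j-1).descFactorial (j-1) : ℕ) : ℝ) := by
      have := hdpos 0; rwa [show 0 + (j-1) = j - 1 by omega] at this
    have A2 : (0:ℝ) < (((j+1).descFactorial (j-1) : ℕ) : ℝ) := by
      have := hdpos 2; rwa [show 2 + (j-1) = j + 1 by omega] at this
    have hf0 : f.coeff 0 ≠ 0 := by
      rw [hcoeff 0, show 0 + (j-1) = j - 1 by omega]
      exact mul_ne_zero A0.ne' hcj1
    have hf1 : f.coeff 1 = 0 := by
      rw [hcoeff 1, show 1 + (j-1) = j by omega, hcj, mul_zero]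
    have hfin := key_lemma f hc hdegf hf0 hf1
    rw [hcoeff 0, hcoeff 2, show 0 + (j-1) = j - 1 by omega,
      show 2 + (j-1) = j + 1 by omega] at hfin
    by_contra hcon
    push_neg at hcon
    nlinarith [mul_nonneg (mul_pos A0 A2).le hcon]
  by_cases hpm : h.coeff (p-1) = 0
  · exfalso
    have descent : ∀ k, k ≤ p - 1 → h.coeff (p - 1 - k) = 0 ∧ h.coeff (p - k) = 0 := by
      intro k
      induction k with
      | zero => intro _; exact ⟨by simpa using hpm, by simpa using hp⟩
      | succ k ih =>
        intro hk
        obtain ⟨h1, h2⟩ := ih (by omega)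
        set j := p - 1 - k with hj
        have hj1 : 1 ≤ j := by omega
        have hjn : j < h.natDegree := by omega
        have hcj1 : h.coeff (j - 1) = 0 := by
          by_contra hne
          have hw := window j hj1 hjn h1 hne
          have hjp : h.coeff (j+1) = 0 := by
            rw [show j + 1 = p - k by omega]; exact h2
          rw [hjp] at hw
          simp at hw
        refine ⟨?_, ?_⟩
        · rw [show p - 1 - (k+1) = j - 1 by omega]; exact hcj1
        · rw [show p - (k+1) = j by omega]; exact h1
    have hcc := (descent (p-1) le_rfl).1
    rw [show p - 1 - (p-1) = 0 by omega] at hcc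
    exact h0 hcc
  · exact window p hp0 hpn hp hpm
end
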